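/- Let F be a finite field of odd characteristic with quadratic character λ, let a ∈ F^×, and let ξ be a multiplicative character of F of exact order 3. Then Σ_{z∈F} ξ(z)·λ(z + a) = −ξ(4a)·λ(a)·j_F(ξ, ξ, ξ). -/

import Mathlib

open Finset

/-- The Jacobi sum `j_F(χ₁, χ₂, χ₃) = ∑_{x₁+x₂+x₃=1} χ₁(x₁)·χ₂(x₂)·χ₃(x₃)` attached to three
multiplicative characters of a finite field `F`. -/
noncomputable def jacobiSum₃ {F : Type*} [Field F] [Fintype F] [DecidableEq F]
    (χ₁ χ₂ χ₃ : MulChar F ℂ) : ℂ :=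
  ∑ v ∈ Finset.univ.filter (fun v : F × F × F => v.1 + v.2.1 + v.2.2 = 1),
    χ₁ v.1 * χ₂ v.2.1 * χ₃ v.2.2

section Aux

variable {F : Type*} [Field F] [Fintype F] [DecidableEq F]

/-- An order-2 multiplicative character agrees with the quadratic character. -/
lemma lam_eq_quadChar (hodd : ringChar F ≠ 2) {lam : MulChar F ℂ} (hlam : orderOf lam = 2)
    (v : F) : lam v = ((quadraticChar F v : ℤ) : ℂ) := by
  have hlam2 : lam ^ 2 = 1 := by rw [← hlam]; exact pow_orderOf_eq_one lam
  have hlam1 : lam ≠ 1 := by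
    intro h
    rw [h, orderOf_one] at hlam
    norm_num at hlam
  have hsq : ∀ b : F, b ≠ 0 → lam b ^ 2 = 1 := by
    intro b hb
    rw [← MulChar.pow_apply' lam two_ne_zero b, hlam2,
      MulChar.one_apply (isUnit_iff_ne_zero.mpr hb)]
  have hsq1 : ∀ b : F, IsSquare b → b ≠ 0 → lam b = 1 := by
    rintro b ⟨c, hc⟩ hb
    have hc0 : c ≠ 0 := by
      rintro rfl
      rw [mul_zero] at hc
      exact hb hc
    rw [hc, map_mul, ← sq]
    exact hsq c hc0
  have hns : ∀ b : F, ¬IsSquare b → b ≠ 0 → lam b = -1 := by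
    intro b hbs hb
    have hmul : lam b * lam b = 1 := by rw [← sq]; exact hsq b hb
    rcases mul_self_eq_one_iff.mp hmul with h1 | h1
    · exfalso
      apply hlam1
      apply MulChar.ext
      intro u
      rw [MulChar.one_apply_coe]
      by_cases hu : IsSquare (u : F)
      · exact hsq1 u hu u.ne_zero
      · have hbu : IsSquare (b * (u : F)) := by
          have : quadraticChar F (b * u) = 1 := by
            rw [map_mul, quadraticChar_neg_one_iff_not_isSquare.mpr hbs,
              quadraticChar_neg_one_iff_not_isSquare.mpr hu]
            ring
          exact (quadraticChar_one_iff_isSquare (mul_ne_zero hb u.ne_zero)).mp this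
        have := hsq1 _ hbu (mul_ne_zero hb u.ne_zero)
        rw [map_mul, h1, one_mul] at this
        exact this
    · exact h1
  by_cases hv : v = 0
  · subst hv
    rw [MulChar.map_zero, MulChar.map_zero]
    norm_num
  by_cases hvs : IsSquare v
  · rw [hsq1 v hvs hv, (quadraticChar_one_iff_isSquare hv).mpr hvs]
    norm_num
  · rw [hns v hvs hv, quadraticChar_neg_one_iff_not_isSquare.mpr hvs]
    norm_num

/-- Counting square roots via the order-2 character. -/
lemma card_sqrts_eq (hodd : ringChar F ≠ 2) {lam : MulChar F ℂ} (hlam : orderOf lam = 2)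
    (v : F) : ((univ.filter fun u : F => u ^ 2 = v).card : ℂ) = 1 + lam v := by
  have h := quadraticChar_card_sqrts hodd v
  have h2 : {x : F | x ^ 2 = v}.toFinset = univ.filter fun u : F => u ^ 2 = v := by
    ext x; simp
  rw [h2] at h
  rw [lam_eq_quadChar hodd hlam]
  have : (((univ.filter fun u : F => u ^ 2 = v).card : ℤ) : ℂ)
      = ((quadraticChar F v + 1 : ℤ) : ℂ) := by exact_mod_cast congrArg (fun n : ℤ => (n : ℂ)) h
  push_cast at this ⊢
  rw [this]; ring

end Aux

section Xi

variable {F : Type*} [Field F] [Fintype F] [DecidableEq F] {ξ : MulChar F ℂ}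

lemma xi_pow_three (hξ : orderOf ξ = 3) : ξ ^ 3 = 1 := by
  rw [← hξ]; exact pow_orderOf_eq_one ξ

lemma xi_ne_one (hξ : orderOf ξ = 3) : ξ ≠ 1 := by
  intro h; rw [h, orderOf_one] at hξ; norm_num at hξ

lemma xi_sq_ne_one (hξ : orderOf ξ = 3) : ξ ^ 2 ≠ 1 := by
  intro h
  have := orderOf_dvd_of_pow_eq_one h
  rw [hξ] at this
  norm_num at this

lemma xi_neg_one (hξ : orderOf ξ = 3) : ξ (-1) = 1 := by
  have h2 : ξ (-1) ^ 2 = 1 := by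
    rw [← map_pow, neg_one_sq, map_one]
  have h3 : ξ (-1) ^ 3 = 1 := by
    rw [← MulChar.pow_apply' ξ (by norm_num) (-1), xi_pow_three hξ,
      MulChar.one_apply isUnit_one.neg]
  calc ξ (-1) = ξ (-1) ^ 3 := by rw [pow_succ, h2, one_mul]
  _ = 1 := h3

/-- The inner sum: `∑ y, ξ(y)·ξ(c−y) = ξ(c)²·j(ξ,ξ)`. -/
lemma xi_inner (hξ : orderOf ξ = 3) (c : F) :
    ∑ y : F, ξ y * ξ (c - y) = ξ c ^ 2 * jacobiSum ξ ξ := by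
  by_cases hc : c = 0
  · subst hc
    have : ∀ y : F, ξ y * ξ (0 - y) = (ξ ^ 2) y := by
      intro y
      rw [MulChar.pow_apply' ξ two_ne_zero, zero_sub,
        show (-y : F) = (-1) * y by ring, map_mul, xi_neg_one hξ, one_mul, sq]
    rw [Finset.sum_congr rfl fun y _ => this y, MulChar.sum_eq_zero_of_ne_one (xi_sq_ne_one hξ),
      MulChar.map_zero]
    ring
  · have := Equiv.sum_comp (Equiv.mulLeft₀ c hc) (fun y => ξ y * ξ (c - y))
    rw [← this]
    have step : ∀ w : F, ξ ((Equiv.mulLeft₀ c hc) w) * ξ (c - (Equiv.mulLeft₀ c hc) w)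
        = ξ c ^ 2 * (ξ w * ξ (1 - w)) := by
      intro w
      simp only [Equiv.mulLeft₀_apply]
      rw [show c - c * w = c * (1 - w) by ring, map_mul, map_mul]
      ring
    rw [Finset.sum_congr rfl fun w _ => step w, ← Finset.mul_sum, jacobiSum]

end Xi

section HD

variable {F : Type*} [Field F] [Fintype F] [DecidableEq F]

/-- `∑_u ξ(1 − u²) = j(λ, ξ)`. -/
lemma sum_one_sub_sq (hodd : ringChar F ≠ 2) {lam : MulChar F ℂ} (hlam : orderOf lam = 2)
    {ξ : MulChar F ℂ} (hξ : orderOf ξ = 3) :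
    ∑ u : F, ξ (1 - u ^ 2) = jacobiSum lam ξ := by
  rw [← Finset.sum_fiberwise univ (fun u : F => u ^ 2) (fun u : F => ξ (1 - u ^ 2))]
  have inner : ∀ v : F, ∑ u ∈ univ.filter (fun u : F => u ^ 2 = v), ξ (1 - u ^ 2)
      = (1 + lam v) * ξ (1 - v) := by
    intro v
    rw [Finset.sum_congr rfl (fun u hu => by
      rw [(Finset.mem_filter.mp hu).2]), Finset.sum_const, nsmul_eq_mul,
      card_sqrts_eq hodd hlam]
  rw [Finset.sum_congr rfl fun v _ => inner v]
  have expand : ∀ v : F, (1 + lam v) * ξ (1 - v) = ξ (1 - v) + lam v * ξ (1 - v) := by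
    intro v; ring
  rw [Finset.sum_congr rfl fun v _ => expand v, Finset.sum_add_distrib]
  have h0 : ∑ v : F, ξ (1 - v) = 0 := by
    rw [show (∑ v : F, ξ (1 - v)) = ∑ v : F, ξ ((Equiv.subLeft 1) v) from rfl,
      Equiv.sum_comp (Equiv.subLeft 1) ξ, MulChar.sum_eq_zero_of_ne_one (xi_ne_one hξ)]
  rw [h0, zero_add, jacobiSum]

/-- Hasse–Davenport-type relation `j(λ, ξ) = ξ(4)·j(ξ, ξ)`. -/
lemma jacobi_lam_xi (hodd : ringChar F ≠ 2) {lam : MulChar F ℂ} (hlam : orderOf lam = 2)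
    {ξ : MulChar F ℂ} (hξ : orderOf ξ = 3) :
    jacobiSum lam ξ = ξ 4 * jacobiSum ξ ξ := by
  have h2 : (2 : F) ≠ 0 := Ring.two_ne_zero hodd
  have h4 : (4 : F) ≠ 0 := by
    have : (4 : F) = 2 * 2 := by norm_num
    rw [this]; exact mul_ne_zero h2 h2
  let e : F ≃ F :=
    { toFun := fun u => (1 + u) / 2
      invFun := fun x => 2 * x - 1
      left_inv := fun u => by field_simp; ring
      right_inv := fun x => by field_simp; ring }
  have key : jacobiSum ξ ξ = (∑ u : F, ξ (1 - u ^ 2)) * ξ (4 : F)⁻¹ := by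
    rw [jacobiSum]
    have hmul : ∀ x : F, ξ x * ξ (1 - x) = ξ (x * (1 - x)) := fun x => (map_mul ξ _ _).symm
    rw [Finset.sum_congr rfl fun x _ => hmul x,
      ← Equiv.sum_comp e (fun x : F => ξ (x * (1 - x)))]
    have harg : ∀ u : F, (e u) * (1 - e u) = (1 - u ^ 2) * (4 : F)⁻¹ := by
      intro u
      show ((1 + u) / 2) * (1 - (1 + u) / 2) = (1 - u ^ 2) * (4 : F)⁻¹
      field_simp
      ring
    rw [Finset.sum_congr rfl fun u _ => by rw [harg u, map_mul], ← Finset.sum_mul]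
  rw [← sum_one_sub_sq hodd hlam hξ, key, mul_comm (ξ 4), mul_assoc, ← map_mul,
    inv_mul_cancel₀ h4, map_one, mul_one]

/-- `j₃(ξ,ξ,ξ) = −j(ξ,ξ)`. -/
lemma jacobiSum₃_eq (hodd : ringChar F ≠ 2) {ξ : MulChar F ℂ} (hξ : orderOf ξ = 3) :
    jacobiSum₃ ξ ξ ξ = -jacobiSum ξ ξ := by
  have hpair : jacobiSum₃ ξ ξ ξ = ∑ p : F × F, ξ p.1 * ξ p.2 * ξ (1 - p.1 - p.2) := by
    rw [jacobiSum₃]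
    refine Finset.sum_nbij' (fun v : F × F × F => (v.1, v.2.1))
      (fun p : F × F => (p.1, p.2, 1 - p.1 - p.2)) ?_ ?_ ?_ ?_ ?_
    · intro v _; exact Finset.mem_univ _
    · intro p _
      simp only [Finset.mem_filter, Finset.mem_univ, true_and]
      ring
    · intro v hv
      have := (Finset.mem_filter.mp hv).2
      ext <;> simp <;> linear_combination -this
    · intro p _; rfl
    · intro v hv
      have h := (Finset.mem_filter.mp hv).2
      have : v.2.2 = 1 - v.1 - v.2.1 := by linear_combination h
      rw [this]
  rw [hpair, Fintype.sum_prod_type]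
  have inner : ∀ x : F, ∑ y : F, ξ x * ξ y * ξ (1 - x - y)
      = ξ x * (ξ (1 - x) ^ 2 * jacobiSum ξ ξ) := by
    intro x
    rw [show (∑ y : F, ξ x * ξ y * ξ (1 - x - y)) = ξ x * ∑ y : F, ξ y * ξ ((1 - x) - y) by
      rw [Finset.mul_sum]; exact Finset.sum_congr rfl fun y _ => by ring,
      xi_inner hξ (1 - x)]
  rw [Finset.sum_congr rfl fun x _ => inner x]
  have : ∀ x : F, ξ x * (ξ (1 - x) ^ 2 * jacobiSum ξ ξ)
      = (ξ x * (ξ ^ 2) (1 - x)) * jacobiSum ξ ξ := by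
    intro x
    rw [MulChar.pow_apply' ξ two_ne_zero]
    ring
  rw [Finset.sum_congr rfl fun x _ => this x, ← Finset.sum_mul]
  have hinv : ξ ^ 2 = ξ⁻¹ := by
    apply eq_inv_of_mul_eq_one_left
    rw [← pow_succ]
    exact xi_pow_three hξ
  have : (∑ x : F, ξ x * (ξ ^ 2) (1 - x)) = jacobiSum ξ (ξ ^ 2) := rfl
  rw [this, hinv, jacobiSum_nontrivial_inv (xi_ne_one hξ), xi_neg_one hξ]
  ring

end HD

/-- Let `F` be a finite field of odd characteristic with quadratic character `λ`, let
`a ∈ F^×`, and let `ξ` be a multiplicative character of `F` of exact order `3`.  Then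
`∑_{z ∈ F} ξ(z)·λ(z + a) = −ξ(4a)·λ(a)·j_F(ξ, ξ, ξ)`. -/
theorem charSum_cubicChar_quadChar (F : Type*) [Field F] [Fintype F] [DecidableEq F]
    (hodd : ringChar F ≠ 2)
    (lam : MulChar F ℂ) (hlam : orderOf lam = 2)
    (a : F) (ha : a ≠ 0)
    (ξ : MulChar F ℂ) (hξ : orderOf ξ = 3) :
    ∑ z : F, ξ z * lam (z + a) = -(ξ (4 * a) * lam a * jacobiSum₃ ξ ξ ξ) := by
  have step1 : ∑ z : F, ξ z * lam (z + a) = ∑ t : F, ξ (t - a) * lam t := by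
    rw [← Equiv.sum_comp (Equiv.subRight a) (fun z : F => ξ z * lam (z + a))]
    refine Finset.sum_congr rfl fun t _ => ?_
    simp [Equiv.subRight_apply, sub_add_cancel]
  have step2 : ∑ t : F, ξ (t - a) * lam t
      = ξ a * lam a * jacobiSum lam ξ := by
    rw [← Equiv.sum_comp (Equiv.mulLeft₀ a ha) (fun t : F => ξ (t - a) * lam t)]
    have term : ∀ u : F, ξ ((Equiv.mulLeft₀ a ha) u - a) * lam ((Equiv.mulLeft₀ a ha) u)
        = (ξ a * lam a) * (lam u * ξ (1 - u)) := by
      intro u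
      simp only [Equiv.mulLeft₀_apply]
      rw [show a * u - a = a * (-(1 - u)) by ring, map_mul, map_mul,
        show (-(1 - u) : F) = (-1) * (1 - u) by ring, map_mul, xi_neg_one hξ]
      ring
    rw [Finset.sum_congr rfl fun u _ => term u, ← Finset.mul_sum, jacobiSum]
  rw [step1, step2, jacobi_lam_xi hodd hlam hξ, jacobiSum₃_eq hodd hξ, map_mul]
  ring
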